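/- Let B ∈ R^{m×d} with m ≤ d, let λ_1 ≥ ... ≥ λ_m ≥ 0 be the eigenvalues of B^T B, and suppose that the l-th largest eigenvalue satisfies λ_l ≥ ds/(3m) for some s > 0. Then there exists an l×l square submatrix F of B with |det(F)| ≥ (s·l²/(3 e² m²))^{l/2}. -/

import Mathlib

open Matrix

section Aux

noncomputable def monos (l d : ℕ) : Finset (Fin l → Fin d) :=
  @Finset.filter _ (fun g => StrictMono g) (Classical.decPred _) Finset.univ

lemma mem_monos {l d : ℕ} {g : Fin l → Fin d} : g ∈ monos l d ↔ StrictMono g := by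
  simp [monos]

variable {R : Type*} [CommRing R]

lemma cauchyBinet {l d : ℕ} (M : Matrix (Fin l) (Fin d) R) (N : Matrix (Fin d) (Fin l) R) :
    (M * N).det = ∑ g ∈ monos l d, (M.submatrix id g).det * (N.submatrix g id).det := by
  classical
  calc
    (M * N).det = ∑ φ : Fin l → Fin d, ∑ σ : Equiv.Perm (Fin l),
        ((Equiv.Perm.sign σ : ℤ) : R) * ∏ i, M (σ i) (φ i) * N (φ i) i := by
      simp only [det_apply', mul_apply, Finset.prod_univ_sum, Finset.mul_sum,
        Fintype.piFinset_univ]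
      rw [Finset.sum_comm]
    _ = ∑ φ : Fin l → Fin d, (∏ i, N (φ i) i) * (M.submatrix id φ).det := by
      refine Finset.sum_congr rfl fun φ _ => ?_
      rw [det_apply', Finset.mul_sum]
      refine Finset.sum_congr rfl fun σ _ => ?_
      rw [Finset.prod_mul_distrib]
      simp only [submatrix_apply, id_eq]
      ring
    _ = ∑ φ ∈ Finset.univ.filter (fun φ : Fin l → Fin d => Function.Injective φ),
        (∏ i, N (φ i) i) * (M.submatrix id φ).det := by
      refine (Finset.sum_subset (Finset.filter_subset _ _) fun φ _ hφ => ?_).symm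
      simp only [Finset.mem_filter, Finset.mem_univ, true_and] at hφ
      obtain ⟨a, b, hab, hne⟩ := Function.not_injective_iff.mp hφ
      have : (M.submatrix id φ).det = 0 :=
        Matrix.det_zero_of_column_eq hne fun k => by simp [submatrix_apply, hab]
      rw [this, mul_zero]
    _ = ∑ p ∈ (monos l d) ×ˢ (Finset.univ : Finset (Equiv.Perm (Fin l))),
        (∏ i, N ((p.1 ∘ p.2) i) i) * (M.submatrix id (p.1 ∘ p.2)).det := by
      symm
      refine Finset.sum_bij (fun p _ => p.1 ∘ (p.2 : Equiv.Perm (Fin l))) ?_ ?_ ?_ ?_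
      · rintro ⟨g, τ⟩ hp
        rw [Finset.mem_product] at hp
        have hg : StrictMono g := mem_monos.mp hp.1
        simp only [Finset.mem_filter, Finset.mem_univ, true_and]
        exact hg.injective.comp τ.injective
      · rintro ⟨g₁, τ₁⟩ hp₁ ⟨g₂, τ₂⟩ hp₂ h
        rw [Finset.mem_product] at hp₁ hp₂
        have hg₁ : StrictMono g₁ := mem_monos.mp hp₁.1
        have hg₂ : StrictMono g₂ := mem_monos.mp hp₂.1
        have h' : g₁ ∘ ⇑τ₁ = g₂ ∘ ⇑τ₂ := h
        haveI : WellFoundedLT (Fin l) := Finite.to_wellFoundedLT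
        have hrange : Set.range g₁ = Set.range g₂ := by
          rw [← τ₁.surjective.range_comp g₁, ← τ₂.surjective.range_comp g₂, h']
        have hg : g₁ = g₂ := (hg₁.range_inj hg₂).mp hrange
        subst hg
        have hτ : τ₁ = τ₂ := Equiv.ext fun i => hg₁.injective (congrFun h' i)
        rw [hτ]
      · intro φ hφ
        simp only [Finset.mem_filter, Finset.mem_univ, true_and] at hφ
        set S : Finset (Fin d) := Finset.image φ Finset.univ with hS
        have hcard : S.card = l := by
          rw [hS, Finset.card_image_of_injective _ hφ, Finset.card_univ, Fintype.card_fin]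
        set g : Fin l → Fin d := fun i => S.orderEmbOfFin hcard i with hgdef
        have hg : StrictMono g := (S.orderEmbOfFin hcard).strictMono
        have hbij : Function.Bijective (fun i : Fin l => (⟨φ i, by
            simp [hS, Finset.mem_image]⟩ : {x // x ∈ S})) := by
          rw [Fintype.bijective_iff_injective_and_card]
          constructor
          · intro a b hab
            exact hφ (congrArg Subtype.val hab)
          · simp [Fintype.card_coe, hcard]
        set e1 : Fin l ≃ {x // x ∈ S} := Equiv.ofBijective _ hbij with he1
        set e2 := S.orderIsoOfFin hcard with he2
        refine ⟨⟨g, (e1.trans e2.toEquiv.symm)⟩, ?_, ?_⟩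
        · rw [Finset.mem_product]
          exact ⟨mem_monos.mpr hg, Finset.mem_univ _⟩
        · funext i
          have h2 : (e2 (e2.toEquiv.symm (e1 i)) : Fin d) = (e1 i : Fin d) :=
            congrArg Subtype.val (e2.apply_symm_apply (e1 i))
          calc (g ∘ ⇑(e1.trans e2.toEquiv.symm)) i
              = S.orderEmbOfFin hcard (e2.toEquiv.symm (e1 i)) := rfl
            _ = (e2 (e2.toEquiv.symm (e1 i)) : Fin d) :=
                (Finset.coe_orderIsoOfFin_apply S hcard _).symm
            _ = (e1 i : Fin d) := h2
            _ = φ i := rfl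
      · rintro ⟨g, τ⟩ hp
        rfl
    _ = ∑ g ∈ monos l d, (M.submatrix id g).det * (N.submatrix g id).det := by
      rw [Finset.sum_product]
      refine Finset.sum_congr rfl fun g hg => ?_
      rw [det_apply' (N.submatrix g id), Finset.mul_sum]
      refine Finset.sum_congr rfl fun τ _ => ?_
      have h1 : M.submatrix id (g ∘ τ) = (M.submatrix id g).submatrix id τ := by
        rw [submatrix_submatrix]; rfl
      rw [h1, Matrix.det_permute']
      simp only [submatrix_apply, id_eq, Function.comp_apply]
      ring

lemma cb_rows {l d : ℕ} (M : Matrix (Fin l) (Fin d) R) :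
    (M * Mᵀ).det = ∑ g ∈ monos l d, (M.submatrix id g).det ^ 2 := by
  rw [cauchyBinet]
  refine Finset.sum_congr rfl fun g _ => ?_
  rw [sq]
  congr 1
  rw [← Matrix.det_transpose (Mᵀ.submatrix g id), transpose_submatrix, transpose_transpose]

lemma cb_gram {l m d : ℕ} (N : Matrix (Fin m) (Fin d) R) (g : Fin l → Fin d) :
    ((Nᵀ * N).submatrix g g).det = ∑ f ∈ monos l m, (N.submatrix f g).det ^ 2 := by
  have h : (Nᵀ * N).submatrix g g = (N.submatrix id g)ᵀ * (N.submatrix id g) := by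
    ext i j
    simp [mul_apply]
  rw [h, cauchyBinet]
  refine Finset.sum_congr rfl fun f _ => ?_
  have h1 : ((N.submatrix id g)ᵀ).submatrix id f = (N.submatrix f g)ᵀ := by
    ext i j
    simp
  have h2 : (N.submatrix id g).submatrix f id = N.submatrix f g := by
    ext i j
    simp
  rw [h1, Matrix.det_transpose, h2, sq]

lemma monos_card_le (l d : ℕ) : (monos l d).card ≤ d.choose l := by
  haveI : WellFoundedLT (Fin l) := Finite.to_wellFoundedLT
  have := Finset.card_le_card_of_injOn (f := fun g : Fin l → Fin d => Finset.image g Finset.univ)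
    (s := monos l d) (t := Finset.powersetCard l (Finset.univ : Finset (Fin d)))
    (fun g hg => by
      rw [Finset.mem_coe, Finset.mem_powersetCard]
      exact ⟨Finset.subset_univ _,
        by rw [Finset.card_image_of_injective _ (mem_monos.mp (Finset.mem_coe.mp hg)).injective,
          Finset.card_univ, Fintype.card_fin]⟩)
    (fun g₁ hg₁ g₂ hg₂ h => by
      have h' : Finset.image g₁ Finset.univ = Finset.image g₂ Finset.univ := h
      have h1 : Set.range g₁ = Set.range g₂ := by
        rw [← Set.image_univ, ← Set.image_univ, ← Finset.coe_univ, ← Finset.coe_image,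
          ← Finset.coe_image, h']
      exact ((mem_monos.mp (Finset.mem_coe.mp hg₁)).range_inj
        (mem_monos.mp (Finset.mem_coe.mp hg₂))).mp h1)
  rwa [Finset.card_powersetCard, Finset.card_univ, Fintype.card_fin] at this

lemma pow_self_le_exp_pow_mul_factorial : ∀ k : ℕ, (k : ℝ) ^ k ≤ Real.exp 1 ^ k * (k.factorial : ℝ)
  | 0 => by simp
  | (k + 1) => by
    have ih := pow_self_le_exp_pow_mul_factorial k
    have hstep : ((k : ℝ) + 1) ^ k ≤ Real.exp 1 * (k : ℝ) ^ k := by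
      rcases Nat.eq_zero_or_pos k with hk | hk
      · subst hk; simpa using Real.one_le_exp (by norm_num)
      · have hkR : (0 : ℝ) < k := by exact_mod_cast hk
        have h1 : ((k : ℝ) + 1) = (k : ℝ) * (1 + 1 / k) := by field_simp
        have h2 : (1 + 1 / (k : ℝ)) ^ k ≤ Real.exp 1 := by
          have hexp := Real.add_one_le_exp (1 / (k : ℝ))
          calc (1 + 1 / (k : ℝ)) ^ k ≤ Real.exp (1 / k) ^ k := by
                apply pow_le_pow_left₀ (by positivity)
                linarith [hexp]
            _ = Real.exp ((k : ℝ) * (1 / k)) := by rw [← Real.exp_nat_mul]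
            _ = Real.exp 1 := by rw [mul_one_div_cancel (ne_of_gt hkR)]
        calc ((k : ℝ) + 1) ^ k = (k : ℝ) ^ k * (1 + 1 / k) ^ k := by rw [h1, mul_pow]
          _ ≤ (k : ℝ) ^ k * Real.exp 1 := by
              apply mul_le_mul_of_nonneg_left h2 (by positivity)
          _ = Real.exp 1 * (k : ℝ) ^ k := by ring
    have hkn : (0:ℝ) ≤ (k:ℝ) + 1 := by positivity
    calc ((k + 1 : ℕ) : ℝ) ^ (k + 1) = ((k : ℝ) + 1) * ((k : ℝ) + 1) ^ k := by
          push_cast; ring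
      _ ≤ ((k : ℝ) + 1) * (Real.exp 1 * (k : ℝ) ^ k) := by
          exact mul_le_mul_of_nonneg_left hstep hkn
      _ ≤ ((k : ℝ) + 1) * (Real.exp 1 * (Real.exp 1 ^ k * (k.factorial : ℝ))) := by
          apply mul_le_mul_of_nonneg_left _ hkn
          exact mul_le_mul_of_nonneg_left ih (le_of_lt (Real.exp_pos 1))
      _ = Real.exp 1 ^ (k + 1) * (((k + 1) * k.factorial : ℕ) : ℝ) := by push_cast; ring
      _ = Real.exp 1 ^ (k + 1) * (((k + 1).factorial : ℕ) : ℝ) := by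
          rw [Nat.factorial_succ]

lemma choose_le_exp_bound {n k : ℕ} (hk : 1 ≤ k) :
    (n.choose k : ℝ) ≤ (Real.exp 1 * n / k) ^ k := by
  have hkR : (0 : ℝ) < k := by exact_mod_cast hk
  have hfac : (0 : ℝ) < (k.factorial : ℝ) := by exact_mod_cast k.factorial_pos
  have h1 : (n.choose k : ℝ) ≤ (n : ℝ) ^ k / (k.factorial : ℝ) := by
    exact_mod_cast Nat.choose_le_pow_div k n
  refine h1.trans ?_
  rw [div_le_iff₀ hfac, div_pow, div_mul_eq_mul_div, le_div_iff₀ (by positivity)]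
  calc (n : ℝ) ^ k * (k : ℝ) ^ k ≤ (n : ℝ) ^ k * (Real.exp 1 ^ k * (k.factorial : ℝ)) := by
        exact mul_le_mul_of_nonneg_left (pow_self_le_exp_pow_mul_factorial k) (by positivity)
    _ = (Real.exp 1 * n) ^ k * (k.factorial : ℝ) := by rw [mul_pow]; ring

end Aux

/-- If the `l`-th largest eigenvalue of `Bᵀ B` is at least `ds/(3m)`, then `B` has an `l × l`
submatrix `F` with `|det F| ≥ (s l² / (3 e² m²))^{l/2}`. -/
theorem stmt_2 {m d : ℕ} (hm : 0 < m) (hmd : m ≤ d) (B : Matrix (Fin m) (Fin d) ℝ)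
    (lam : Fin d → ℝ)
    (hmono : ∀ i j : Fin d, i ≤ j → lam j ≤ lam i)
    (hdiag : ∃ U : Matrix (Fin d) (Fin d) ℝ,
      Uᵀ * U = 1 ∧ Bᵀ * B = Uᵀ * Matrix.diagonal lam * U)
    (s : ℝ) (hs : 0 < s)
    (l : ℕ) (hl : 1 ≤ l) (hlm : l ≤ m)
    (heig : (d : ℝ) * s / (3 * m) ≤ lam ⟨l - 1, by omega⟩) :
    ∃ (f : Fin l → Fin m) (g : Fin l → Fin d),
      Function.Injective f ∧ Function.Injective g ∧
      (s * (l : ℝ) ^ 2 / (3 * Real.exp 1 ^ 2 * (m : ℝ) ^ 2)) ^ ((l : ℝ) / 2)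
        ≤ |(B.submatrix f g).det| := by
  classical
  obtain ⟨U, hU, hBU⟩ := hdiag
  have hUU : U * Uᵀ = 1 := mul_eq_one_comm.mp hU
  have hld : l ≤ d := le_trans hlm hmd
  -- eigenvalues are nonnegative
  have hDeq : Matrix.diagonal lam = (B * Uᵀ)ᵀ * (B * Uᵀ) := by
    rw [Matrix.transpose_mul, Matrix.transpose_transpose]
    calc Matrix.diagonal lam = (U * Uᵀ) * Matrix.diagonal lam * (U * Uᵀ) := by
          rw [hUU, Matrix.one_mul, Matrix.mul_one]
      _ = U * (Uᵀ * Matrix.diagonal lam * U) * Uᵀ := by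
          simp only [← Matrix.mul_assoc]
      _ = U * (Bᵀ * B) * Uᵀ := by rw [← hBU]
      _ = U * Bᵀ * (B * Uᵀ) := by simp only [← Matrix.mul_assoc]
  have hlam : ∀ i, 0 ≤ lam i := by
    intro i
    have h2 : (Matrix.diagonal lam) i i = ((B * Uᵀ)ᵀ * (B * Uᵀ)) i i := by rw [← hDeq]
    rw [Matrix.diagonal_apply_eq] at h2
    rw [h2, Matrix.mul_apply]
    exact Finset.sum_nonneg fun k _ => by
      rw [Matrix.transpose_apply]; exact mul_self_nonneg _
  set sq : Fin d → ℝ := fun i => Real.sqrt (lam i) with hsqdef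
  have hsqsq : (fun i => sq i * sq i) = lam := by
    funext i; exact Real.mul_self_sqrt (hlam i)
  set W : Matrix (Fin d) (Fin d) ℝ := Matrix.diagonal sq * U with hWdef
  have hWW : Wᵀ * W = Bᵀ * B := by
    rw [hWdef, Matrix.transpose_mul, Matrix.diagonal_transpose, hBU]
    calc Uᵀ * Matrix.diagonal sq * (Matrix.diagonal sq * U)
        = Uᵀ * (Matrix.diagonal sq * Matrix.diagonal sq) * U := by
          simp only [← Matrix.mul_assoc]
      _ = Uᵀ * Matrix.diagonal lam * U := by
          rw [Matrix.diagonal_mul_diagonal, hsqsq]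
  have hWWT : W * Wᵀ = Matrix.diagonal lam := by
    rw [hWdef, Matrix.transpose_mul, Matrix.diagonal_transpose]
    calc Matrix.diagonal sq * U * (Uᵀ * Matrix.diagonal sq)
        = Matrix.diagonal sq * (U * Uᵀ) * Matrix.diagonal sq := by
          simp only [← Matrix.mul_assoc]
      _ = Matrix.diagonal sq * Matrix.diagonal sq := by rw [hUU, Matrix.mul_one]
      _ = Matrix.diagonal lam := by rw [Matrix.diagonal_mul_diagonal, hsqsq]
  -- key identity
  have key : ∑ g ∈ monos l d, ∑ f ∈ monos l m, ((B.submatrix f g).det) ^ 2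
      = ∑ h ∈ monos l d, ∏ i, lam (h i) := by
    calc ∑ g ∈ monos l d, ∑ f ∈ monos l m, ((B.submatrix f g).det) ^ 2
        = ∑ g ∈ monos l d, ((Bᵀ * B).submatrix g g).det :=
          Finset.sum_congr rfl fun g _ => (cb_gram B g).symm
      _ = ∑ g ∈ monos l d, ∑ f ∈ monos l d, ((W.submatrix f g).det) ^ 2 := by
          refine Finset.sum_congr rfl fun g _ => ?_
          rw [← hWW, cb_gram]
      _ = ∑ f ∈ monos l d, ∑ g ∈ monos l d, ((W.submatrix f g).det) ^ 2 := Finset.sum_comm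
      _ = ∑ f ∈ monos l d, ∏ i, lam (f i) := by
          refine Finset.sum_congr rfl fun f hf => ?_
          have hfi : Function.Injective f := (mem_monos.mp hf).injective
          have h1 : ∀ g ∈ monos l d,
              (W.submatrix f g).det ^ 2 = ((W.submatrix f id).submatrix id g).det ^ 2 := by
            intro g _
            have heq : (W.submatrix f id).submatrix id g = W.submatrix f g := by
              rw [Matrix.submatrix_submatrix, Function.comp_id, Function.id_comp]
            rw [heq]
          rw [Finset.sum_congr rfl h1, ← cb_rows]
          have h2 : W.submatrix f id * (W.submatrix f id)ᵀ
              = (Matrix.diagonal lam).submatrix f f := by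
            rw [← hWWT]
            ext i j
            simp [Matrix.mul_apply]
          rw [h2]
          have h3 : (Matrix.diagonal lam).submatrix f f
              = Matrix.diagonal (fun i => lam (f i)) := by
            ext i j
            by_cases hij : i = j
            · subst hij; simp
            · rw [Matrix.submatrix_apply, Matrix.diagonal_apply_ne _ (fun h => hij (hfi h)),
                Matrix.diagonal_apply_ne _ hij]
          rw [h3, Matrix.det_diagonal]
  -- lower bound on the sum
  set X0 : ℝ := (d : ℝ) * s / (3 * m) with hX0def
  have hd0 : 0 < d := lt_of_lt_of_le hm hmd
  have hdR : (0:ℝ) < d := by exact_mod_cast hd0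
  have hmR : (0:ℝ) < m := by exact_mod_cast hm
  have hlR : (0:ℝ) < l := by exact_mod_cast hl
  have hX0pos : 0 < X0 := by rw [hX0def]; positivity
  set g₀ : Fin l → Fin d := fun i => ⟨i.1, lt_of_lt_of_le i.2 hld⟩ with hg₀def
  have hg₀mono : StrictMono g₀ := fun a b hab => hab
  have hg₀mem : g₀ ∈ monos l d := mem_monos.mpr hg₀mono
  set f₀ : Fin l → Fin m := fun i => ⟨i.1, lt_of_lt_of_le i.2 hlm⟩ with hf₀def
  have hf₀mono : StrictMono f₀ := fun a b hab => hab
  have hglam : ∀ i : Fin l, X0 ≤ lam (g₀ i) := by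
    intro i
    refine le_trans heig (hmono _ _ ?_)
    rw [Fin.le_def]
    simp only [hg₀def]
    omega
  have hlow : X0 ^ l ≤ ∑ h ∈ monos l d, ∏ i, lam (h i) := by
    have h1 : X0 ^ l ≤ ∏ i : Fin l, lam (g₀ i) := by
      calc X0 ^ l = ∏ _i : Fin l, X0 := by
            rw [Finset.prod_const, Finset.card_univ, Fintype.card_fin]
        _ ≤ ∏ i, lam (g₀ i) :=
            Finset.prod_le_prod (fun _ _ => le_of_lt hX0pos) (fun i _ => hglam i)
    exact h1.trans (Finset.single_le_sum
      (f := fun h : Fin l → Fin d => ∏ i, lam (h i))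
      (fun h _ => Finset.prod_nonneg fun i _ => hlam _) hg₀mem)
  -- maximizer
  have hne : ((monos l d) ×ˢ (monos l m)).Nonempty :=
    ⟨(g₀, f₀), by rw [Finset.mem_product]; exact ⟨hg₀mem, mem_monos.mpr hf₀mono⟩⟩
  obtain ⟨p, hpmem, hpmax⟩ := Finset.exists_max_image ((monos l d) ×ˢ (monos l m))
    (fun q => (B.submatrix q.2 q.1).det ^ 2) hne
  rw [Finset.mem_product] at hpmem
  set Fmax : ℝ := (B.submatrix p.2 p.1).det ^ 2 with hFmaxdef
  have hFmax0 : 0 ≤ Fmax := sq_nonneg _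
  have hsum_le : ∑ g ∈ monos l d, ∑ f ∈ monos l m, ((B.submatrix f g).det) ^ 2
      ≤ (((monos l d).card : ℝ) * ((monos l m).card : ℝ)) * Fmax := by
    calc ∑ g ∈ monos l d, ∑ f ∈ monos l m, ((B.submatrix f g).det) ^ 2
        = ∑ q ∈ (monos l d) ×ˢ (monos l m), (B.submatrix q.2 q.1).det ^ 2 := by
          rw [Finset.sum_product]
      _ ≤ ((monos l d) ×ˢ (monos l m)).card • Fmax :=
          Finset.sum_le_card_nsmul _ _ _ (fun q hq => hpmax q hq)
      _ = (((monos l d).card : ℝ) * ((monos l m).card : ℝ)) * Fmax := by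
          rw [Finset.card_product, nsmul_eq_mul]
          push_cast
          ring
  -- cardinal bounds
  have hcd : ((monos l d).card : ℝ) ≤ (Real.exp 1 * d / l) ^ l := by
    refine le_trans ?_ (choose_le_exp_bound hl)
    exact_mod_cast monos_card_le l d
  have hcm : ((monos l m).card : ℝ) ≤ (Real.exp 1 * m / l) ^ l := by
    refine le_trans ?_ (choose_le_exp_bound hl)
    exact_mod_cast monos_card_le l m
  set A : ℝ := (Real.exp 1 * d / l) ^ l * (Real.exp 1 * m / l) ^ l with hAdef
  have hApos : 0 < A := by
    rw [hAdef]
    have := Real.exp_pos 1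
    positivity
  have hchain : X0 ^ l ≤ A * Fmax := by
    refine (hlow.trans (key ▸ hsum_le)).trans ?_
    apply mul_le_mul_of_nonneg_right _ hFmax0
    exact mul_le_mul hcd hcm (by positivity) (by positivity)
  set X : ℝ := s * (l : ℝ) ^ 2 / (3 * Real.exp 1 ^ 2 * (m : ℝ) ^ 2) with hXdef
  have hXpos : 0 < X := by
    rw [hXdef]
    have := Real.exp_pos 1
    positivity
  have hXA : X ^ l * A = X0 ^ l := by
    rw [hAdef, hXdef, hX0def, ← mul_pow, ← mul_pow]
    congr 1
    have hE := (Real.exp_pos 1).ne'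
    field_simp
  have hfinal : X ^ l ≤ Fmax := by
    have h1 : X ^ l * A ≤ Fmax * A := by
      rw [hXA, mul_comm Fmax A]; exact hchain
    exact le_of_mul_le_mul_right h1 hApos
  refine ⟨p.2, p.1, (mem_monos.mp hpmem.2).injective, (mem_monos.mp hpmem.1).injective, ?_⟩
  have hrw : X ^ ((l : ℝ) / 2) = Real.sqrt (X ^ l) := by
    rw [Real.sqrt_eq_rpow, ← Real.rpow_natCast X l, ← Real.rpow_mul hXpos.le]
    congr 1
    ring
  calc (s * (l : ℝ) ^ 2 / (3 * Real.exp 1 ^ 2 * (m : ℝ) ^ 2)) ^ ((l : ℝ) / 2)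
      = Real.sqrt (X ^ l) := hrw
    _ ≤ Real.sqrt Fmax := Real.sqrt_le_sqrt hfinal
    _ = |(B.submatrix p.2 p.1).det| := by
        rw [hFmaxdef, Real.sqrt_sq_eq_abs]
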